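/- Let (c_k)_{k≥1} be nonnegative reals with V_N = 2·∑_{k=1}^N k²c_k² slowly varying (Karamata) and V_N → ∞. Then N·∑_{s,t ≥ N, |s−t| ≤ N−1} c_s·c_t = o(V_N) as N → ∞. -/

import Mathlib

open Filter Finset

private lemma head_aux (c : ℕ → ℝ) (hc : ∀ k, 0 ≤ c k)
    (V : ℕ → ℝ) (hV : ∀ N, V N = 2 * ∑ k ∈ Icc 1 N, (k : ℝ) ^ 2 * c k ^ 2)
    (N : ℕ) (hN1 : 1 ≤ N) :
    ∀ P, N ≤ P → ∑ s ∈ Ico N P, (N:ℝ)^2 * c s ^ 2 ≤ V P / 2 - V (N-1) / 2 := by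
  have hsum : ∀ K : ℕ, ∑ k ∈ Icc 1 K, (k : ℝ) ^ 2 * c k ^ 2 = V K / 2 := fun (K : ℕ) => by
    rw [hV]; ring
  intro P hP
  have h1 : ∑ s ∈ Ico N P, (N:ℝ)^2 * c s ^ 2 ≤ ∑ s ∈ Ico N P, (s:ℝ)^2 * c s ^ 2 := by
    refine Finset.sum_le_sum fun s hs => ?_
    have hNs : N ≤ s := (Finset.mem_Ico.mp hs).1
    have hNs' : (N:ℝ) ≤ s := Nat.cast_le.mpr hNs
    exact mul_le_mul_of_nonneg_right (pow_le_pow_left₀ (Nat.cast_nonneg N) hNs' 2) (sq_nonneg _)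
  have h2 : ∑ s ∈ Ico 1 N, (s:ℝ)^2 * c s ^ 2 + ∑ s ∈ Ico N P, (s:ℝ)^2 * c s ^ 2
      = ∑ s ∈ Ico 1 P, (s:ℝ)^2 * c s ^ 2 :=
    Finset.sum_Ico_consecutive _ hN1 hP
  have h3 : ∑ s ∈ Ico 1 P, (s:ℝ)^2 * c s ^ 2 ≤ V P / 2 := by
    rw [← hsum]
    refine Finset.sum_le_sum_of_subset_of_nonneg ?_ (fun i _ _ => by positivity)
    rw [← Finset.Ico_add_one_right_eq_Icc]
    exact Finset.Ico_subset_Ico_right (Nat.le_succ P)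
  have h4 : ∑ s ∈ Ico 1 N, (s:ℝ)^2 * c s ^ 2 = V (N-1) / 2 := by
    rw [← hsum]
    have he : Finset.Ico 1 N = Finset.Icc 1 (N-1) := by
      rw [← Finset.Ico_add_one_right_eq_Icc]
      congr 1
      omega
    rw [he]
  linarith

private lemma tail_aux (c : ℕ → ℝ) (hc : ∀ k, 0 ≤ c k)
    (V : ℕ → ℝ) (hV : ∀ N, V N = 2 * ∑ k ∈ Icc 1 N, (k : ℝ) ^ 2 * c k ^ 2)
    (N : ℕ) (hN1 : 1 ≤ N) (hVN : 0 < V N)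
    (hpow : ∀ j : ℕ, V (2^j * N) ≤ (2:ℝ)^j * V N) :
    ∀ J J' : ℕ, J ≤ J' →
      ∑ s ∈ Ico (2^J * N) (2^J' * N), (N:ℝ)^2 * c s ^ 2
        ≤ (2*(2:ℝ)⁻¹^J - 2*(2:ℝ)⁻¹^J') * V N := by
  have hsum : ∀ K : ℕ, (∑ k ∈ Icc 1 K, (k : ℝ) ^ 2 * c k ^ 2) = V K / 2 := fun K => by
    rw [hV]; ring
  intro J J' hJJ'
  induction J', hJJ' using Nat.le_induction with
  | base => simp
  | succ J' hJ ih =>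
    have hle1 : 2^J * N ≤ 2^J' * N :=
      Nat.mul_le_mul_right N (Nat.pow_le_pow_right (by norm_num) hJ)
    have hle2 : 2^J' * N ≤ 2^(J'+1) * N :=
      Nat.mul_le_mul_right N (Nat.pow_le_pow_right (by norm_num) (Nat.le_succ _))
    rw [← Finset.sum_Ico_consecutive _ hle1 hle2]
    have hblock : ∑ s ∈ Ico (2^J' * N) (2^(J'+1) * N), (N:ℝ)^2 * c s ^ 2
        ≤ (2:ℝ)⁻¹^J' * V N := by
      have hstep1 : ∑ s ∈ Ico (2^J' * N) (2^(J'+1) * N), (N:ℝ)^2 * c s ^ 2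
          ≤ ∑ s ∈ Ico (2^J' * N) (2^(J'+1) * N), ((2:ℝ)⁻¹^J')^2 * ((s:ℝ)^2 * c s ^ 2) := by
        refine Finset.sum_le_sum fun s hs => ?_
        have hs1 : 2^J' * N ≤ s := (Finset.mem_Ico.mp hs).1
        have hcast : (2:ℝ)^J' * (N:ℝ) ≤ (s:ℝ) := by
          calc (2:ℝ)^J' * (N:ℝ) = ((2^J' * N : ℕ) : ℝ) := by push_cast; ring
            _ ≤ (s:ℝ) := Nat.cast_le.mpr hs1
        have hNs : (N:ℝ) ≤ (2:ℝ)⁻¹^J' * (s:ℝ) := by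
          rw [inv_pow, inv_mul_eq_div, le_div_iff₀ (by positivity)]
          calc (N:ℝ) * 2^J' = 2^J' * N := by ring
            _ ≤ s := hcast
        calc (N:ℝ)^2 * c s ^ 2 ≤ ((2:ℝ)⁻¹^J' * s)^2 * c s ^ 2 :=
              mul_le_mul_of_nonneg_right (pow_le_pow_left₀ (Nat.cast_nonneg N) hNs 2) (sq_nonneg _)
          _ = ((2:ℝ)⁻¹^J')^2 * ((s:ℝ)^2 * c s ^ 2) := by ring
      have hsubI : Ico (2^J' * N) (2^(J'+1) * N) ⊆ Icc 1 (2^(J'+1) * N) := by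
        intro s hs
        rw [Finset.mem_Ico] at hs
        rw [Finset.mem_Icc]
        have h1 : 0 < 2^J' * N := by positivity
        omega
      have hstep2 : ∑ s ∈ Ico (2^J' * N) (2^(J'+1) * N), (s:ℝ)^2 * c s ^ 2
          ≤ V (2^(J'+1) * N) / 2 := by
        rw [← hsum]
        exact Finset.sum_le_sum_of_subset_of_nonneg hsubI (fun i _ _ => by positivity)
      have hone : (2:ℝ)⁻¹^J' * (2:ℝ)^J' = 1 := by
        rw [← mul_pow]; norm_num
      calc ∑ s ∈ Ico (2^J' * N) (2^(J'+1) * N), (N:ℝ)^2 * c s ^ 2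
          ≤ ∑ s ∈ Ico (2^J' * N) (2^(J'+1) * N), ((2:ℝ)⁻¹^J')^2 * ((s:ℝ)^2 * c s ^ 2) := hstep1
        _ = ((2:ℝ)⁻¹^J')^2 * ∑ s ∈ Ico (2^J' * N) (2^(J'+1) * N), (s:ℝ)^2 * c s ^ 2 :=
            (Finset.mul_sum _ _ _).symm
        _ ≤ ((2:ℝ)⁻¹^J')^2 * (V (2^(J'+1) * N) / 2) :=
            mul_le_mul_of_nonneg_left hstep2 (by positivity)
        _ ≤ ((2:ℝ)⁻¹^J')^2 * ((2:ℝ)^(J'+1) * V N / 2) := by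
            refine mul_le_mul_of_nonneg_left ?_ (by positivity)
            have := hpow (J'+1)
            linarith
        _ = (2:ℝ)⁻¹^J' * ((2:ℝ)⁻¹^J' * (2:ℝ)^J') * V N := by rw [pow_succ]; ring
        _ = (2:ℝ)⁻¹^J' * V N := by rw [hone, mul_one]
    have hhalf : 2*(2:ℝ)⁻¹^(J'+1) = (2:ℝ)⁻¹^J' := by
      rw [pow_succ]
      ring_nf
    have hexp : (2*(2:ℝ)⁻¹^J - 2*(2:ℝ)⁻¹^(J'+1)) * V N
        = (2*(2:ℝ)⁻¹^J - 2*(2:ℝ)⁻¹^J') * V N + (2:ℝ)⁻¹^J' * V N := by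
      rw [← hhalf]; ring
    linarith

private lemma key_aux (c : ℕ → ℝ) (hc : ∀ k, 0 ≤ c k)
    (V : ℕ → ℝ) (hV : ∀ N, V N = 2 * ∑ k ∈ Icc 1 N, (k : ℝ) ^ 2 * c k ^ 2)
    (N : ℕ) (hN1 : 1 ≤ N) (hVN : 0 < V N)
    (hpow : ∀ j : ℕ, V (2^j * N) ≤ (2:ℝ)^j * V N) :
    ∀ J M : ℕ, ∑ s ∈ range M, (if N ≤ s then (N:ℝ)^2 * c s ^ 2 else 0)
      ≤ V (2^J * N)/2 - V (N-1)/2 + 2*(2:ℝ)⁻¹^J * V N := by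
  intro J M
  set J' := max J M with hJ'
  have hg0 : ∀ s, 0 ≤ (if N ≤ s then (N:ℝ)^2 * c s ^ 2 else 0) := by
    intro s; split_ifs
    · positivity
    · exact le_rfl
  have hMle : M ≤ 2^J' * N := by
    calc M ≤ 2^M := (Nat.lt_two_pow_self (n := M)).le
      _ ≤ 2^J' := Nat.pow_le_pow_right (by norm_num) (le_max_right _ _)
      _ ≤ 2^J' * N := Nat.le_mul_of_pos_right _ (by omega)
  have hNle : N ≤ 2^J' * N := by
    calc N = 1*N := (one_mul N).symm
      _ ≤ 2^J' * N := Nat.mul_le_mul_right N Nat.one_le_two_pow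
  have hN2J : N ≤ 2^J * N := by
    calc N = 1*N := (one_mul N).symm
      _ ≤ 2^J * N := Nat.mul_le_mul_right N Nat.one_le_two_pow
  have h2JJ' : 2^J * N ≤ 2^J' * N :=
    Nat.mul_le_mul_right N (Nat.pow_le_pow_right (by norm_num) (le_max_left _ _))
  have step1 : ∑ s ∈ range M, (if N ≤ s then (N:ℝ)^2 * c s ^ 2 else 0)
      ≤ ∑ s ∈ range (2^J' * N), (if N ≤ s then (N:ℝ)^2 * c s ^ 2 else 0) :=
    Finset.sum_le_sum_of_subset_of_nonneg (Finset.range_subset_range.mpr hMle) (fun i _ _ => hg0 i)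
  have step2 : ∑ s ∈ range (2^J' * N), (if N ≤ s then (N:ℝ)^2 * c s ^ 2 else 0)
      = ∑ s ∈ Ico N (2^J' * N), (N:ℝ)^2 * c s ^ 2 := by
    rw [Finset.range_eq_Ico, ← Finset.sum_Ico_consecutive _ (Nat.zero_le N) hNle]
    have e1 : ∑ s ∈ Ico 0 N, (if N ≤ s then (N:ℝ)^2 * c s ^ 2 else 0) = 0 :=
      Finset.sum_eq_zero fun s hs => if_neg (by rw [Finset.mem_Ico] at hs; omega)
    have e2 : ∑ s ∈ Ico N (2^J' * N), (if N ≤ s then (N:ℝ)^2 * c s ^ 2 else 0)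
        = ∑ s ∈ Ico N (2^J' * N), (N:ℝ)^2 * c s ^ 2 :=
      Finset.sum_congr rfl fun s hs => if_pos (Finset.mem_Ico.mp hs).1
    rw [e1, e2, zero_add]
  have step3 : ∑ s ∈ Ico N (2^J' * N), (N:ℝ)^2 * c s ^ 2
      = ∑ s ∈ Ico N (2^J * N), (N:ℝ)^2 * c s ^ 2
        + ∑ s ∈ Ico (2^J * N) (2^J' * N), (N:ℝ)^2 * c s ^ 2 :=
    (Finset.sum_Ico_consecutive _ hN2J h2JJ').symm
  have hhead := head_aux c hc V hV N hN1 (2^J * N) hN2J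
  have htail := tail_aux c hc V hV N hN1 hVN hpow J J' (le_max_left _ _)
  have hnn : 0 ≤ 2*(2:ℝ)⁻¹^J' * V N := by positivity
  rw [sub_mul] at htail
  linarith

private lemma stepA_aux (c : ℕ → ℝ) (hc : ∀ k, 0 ≤ c k) (N : ℕ) (hN1 : 1 ≤ N)
    (hg : Summable (fun s => if N ≤ s then (N:ℝ)^2 * c s ^ 2 else 0)) :
    ∑' p : ℕ × ℕ, (if N ≤ p.1 ∧ N ≤ p.2 ∧ p.1 ≤ p.2 + (N-1) ∧ p.2 ≤ p.1 + (N-1)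
        then c p.1 * c p.2 else 0)
      ≤ (2/(N:ℝ)) * ∑' s, (if N ≤ s then (N:ℝ)^2 * c s ^ 2 else 0) := by
  have hg0 : ∀ s, 0 ≤ (if N ≤ s then (N:ℝ)^2 * c s ^ 2 else 0) := by
    intro s; split_ifs
    · positivity
    · exact le_rfl
  have htg0 : 0 ≤ ∑' s, (if N ≤ s then (N:ℝ)^2 * c s ^ 2 else 0) := tsum_nonneg hg0
  have hf0 : ∀ p : ℕ × ℕ, 0 ≤ (if N ≤ p.1 ∧ N ≤ p.2 ∧ p.1 ≤ p.2 + (N-1) ∧ p.2 ≤ p.1 + (N-1)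
      then c p.1 * c p.2 else 0) := by
    intro p; split_ifs
    · exact mul_nonneg (hc _) (hc _)
    · exact le_rfl
  apply tsum_le_of_sum_le'
  · positivity
  · intro F
    set M := (F.sup fun p : ℕ × ℕ => max p.1 p.2) + 1 with hM
    have hsub : F ⊆ range M ×ˢ range M := by
      intro p hp
      have h := Finset.le_sup (f := fun p : ℕ × ℕ => max p.1 p.2) hp
      rw [Finset.mem_product, Finset.mem_range, Finset.mem_range]
      exact ⟨lt_of_le_of_lt (le_trans (le_max_left _ _) h) (Nat.lt_succ_self _),
        lt_of_le_of_lt (le_trans (le_max_right _ _) h) (Nat.lt_succ_self _)⟩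
    have hcomm : (∑ s ∈ range M, ∑ t ∈ range M,
          (if N ≤ t ∧ N ≤ s ∧ t ≤ s + (N-1) ∧ s ≤ t + (N-1) then c s ^ 2 else 0))
        = ∑ s ∈ range M, ∑ t ∈ range M,
          (if N ≤ s ∧ N ≤ t ∧ s ≤ t + (N-1) ∧ t ≤ s + (N-1) then c s ^ 2 else 0) := by
      refine Finset.sum_congr rfl fun u _ => Finset.sum_congr rfl fun v _ => ?_
      exact if_congr (by tauto) rfl rfl
    calc ∑ p ∈ F, (if N ≤ p.1 ∧ N ≤ p.2 ∧ p.1 ≤ p.2 + (N-1) ∧ p.2 ≤ p.1 + (N-1)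
            then c p.1 * c p.2 else 0)
        ≤ ∑ p ∈ range M ×ˢ range M, (if N ≤ p.1 ∧ N ≤ p.2 ∧ p.1 ≤ p.2 + (N-1) ∧ p.2 ≤ p.1 + (N-1)
            then c p.1 * c p.2 else 0) :=
          Finset.sum_le_sum_of_subset_of_nonneg hsub (fun p _ _ => hf0 p)
      _ = ∑ s ∈ range M, ∑ t ∈ range M,
            (if N ≤ s ∧ N ≤ t ∧ s ≤ t + (N-1) ∧ t ≤ s + (N-1) then c s * c t else 0) := by
          rw [Finset.sum_product]
      _ ≤ ∑ s ∈ range M, ∑ t ∈ range M,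
            (((if N ≤ s ∧ N ≤ t ∧ s ≤ t + (N-1) ∧ t ≤ s + (N-1) then c s ^ 2 else 0)
            + (if N ≤ s ∧ N ≤ t ∧ s ≤ t + (N-1) ∧ t ≤ s + (N-1) then c t ^ 2 else 0))/2) := by
          refine Finset.sum_le_sum fun s _ => Finset.sum_le_sum fun t _ => ?_
          split_ifs
          · nlinarith [sq_nonneg (c s - c t)]
          · norm_num
      _ = ((∑ s ∈ range M, ∑ t ∈ range M,
              (if N ≤ s ∧ N ≤ t ∧ s ≤ t + (N-1) ∧ t ≤ s + (N-1) then c s ^ 2 else 0))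
          + (∑ s ∈ range M, ∑ t ∈ range M,
              (if N ≤ s ∧ N ≤ t ∧ s ≤ t + (N-1) ∧ t ≤ s + (N-1) then c t ^ 2 else 0)))/2 := by
          simp only [← Finset.sum_div, Finset.sum_add_distrib]
      _ = ∑ s ∈ range M, ∑ t ∈ range M,
            (if N ≤ s ∧ N ≤ t ∧ s ≤ t + (N-1) ∧ t ≤ s + (N-1) then c s ^ 2 else 0) := by
          have h2 : (∑ s ∈ range M, ∑ t ∈ range M,
              (if N ≤ s ∧ N ≤ t ∧ s ≤ t + (N-1) ∧ t ≤ s + (N-1) then c t ^ 2 else 0))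
              = ∑ s ∈ range M, ∑ t ∈ range M,
              (if N ≤ s ∧ N ≤ t ∧ s ≤ t + (N-1) ∧ t ≤ s + (N-1) then c s ^ 2 else 0) := by
            rw [Finset.sum_comm]
            exact hcomm
          rw [h2]; ring
      _ ≤ ∑ s ∈ range M, (2/(N:ℝ)) * (if N ≤ s then (N:ℝ)^2 * c s ^ 2 else 0) := by
          refine Finset.sum_le_sum fun s _ => ?_
          by_cases hNs : N ≤ s
          · rw [if_pos hNs]
            have hfil : (∑ t ∈ range M,
                (if N ≤ s ∧ N ≤ t ∧ s ≤ t + (N-1) ∧ t ≤ s + (N-1) then c s ^ 2 else 0))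
                = ∑ t ∈ (range M).filter (fun t => N ≤ s ∧ N ≤ t ∧ s ≤ t + (N-1) ∧ t ≤ s + (N-1)),
                    c s ^ 2 := (Finset.sum_filter _ _).symm
            rw [hfil, Finset.sum_const, nsmul_eq_mul]
            have hcard : ((range M).filter
                (fun t => N ≤ s ∧ N ≤ t ∧ s ≤ t + (N-1) ∧ t ≤ s + (N-1))).card ≤ 2*N := by
              have hsubI : (range M).filter
                  (fun t => N ≤ s ∧ N ≤ t ∧ s ≤ t + (N-1) ∧ t ≤ s + (N-1))
                  ⊆ Icc (s-(N-1)) (s+(N-1)) := by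
                intro t ht
                rw [Finset.mem_filter] at ht
                obtain ⟨-, -, -, h3, h4⟩ := ht
                rw [mem_Icc]; omega
              calc ((range M).filter _).card ≤ (Icc (s-(N-1)) (s+(N-1))).card :=
                    Finset.card_le_card hsubI
                _ = s+(N-1)+1 - (s-(N-1)) := Nat.card_Icc _ _
                _ ≤ 2*N := by omega
            have hNne : (N:ℝ) ≠ 0 := Nat.cast_ne_zero.mpr (by omega)
            have heq : (2/(N:ℝ)) * ((N:ℝ)^2 * c s ^ 2) = (2*(N:ℝ)) * c s ^ 2 := by
              field_simp
            rw [heq]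
            refine mul_le_mul_of_nonneg_right ?_ (sq_nonneg _)
            calc (((range M).filter _).card : ℝ) ≤ ((2*N : ℕ) : ℝ) := Nat.cast_le.mpr hcard
              _ = 2*(N:ℝ) := by push_cast; ring
          · rw [if_neg hNs, mul_zero]
            rw [Finset.sum_eq_zero fun t _ => if_neg (fun h => hNs h.1)]
      _ = (2/(N:ℝ)) * ∑ s ∈ range M, (if N ≤ s then (N:ℝ)^2 * c s ^ 2 else 0) :=
          (Finset.mul_sum _ _ _).symm
      _ ≤ (2/(N:ℝ)) * ∑' s, (if N ≤ s then (N:ℝ)^2 * c s ^ 2 else 0) := by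
          refine mul_le_mul_of_nonneg_left ?_ (by positivity)
          exact Summable.sum_le_tsum _ (fun i _ => hg0 i) hg

/-- Lemma 2.1 (iii): if `V_N = 2∑_{k=1}^N k²c_k²` is slowly varying (Karamata) and
diverges, then `N·∑_{s,t≥N, |s−t|≤N−1} c_s·c_t = o(V_N)`. -/
theorem offdiag_sum_isLittleO_three
    (c : ℕ → ℝ) (hc : ∀ k, 0 ≤ c k)
    (V : ℕ → ℝ) (hV : ∀ N, V N = 2 * ∑ k ∈ Icc 1 N, (k : ℝ) ^ 2 * c k ^ 2)
    (hslow : ∀ l : ℝ, 0 < l →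
      Tendsto (fun N : ℕ => V ⌊l * N⌋₊ / V N) atTop (nhds 1))
    (hdiv : Tendsto V atTop atTop) :
    (fun N : ℕ => (N : ℝ) * ∑' p : ℕ × ℕ,
        if N ≤ p.1 ∧ N ≤ p.2 ∧ p.1 ≤ p.2 + (N - 1) ∧ p.2 ≤ p.1 + (N - 1)
        then c p.1 * c p.2 else 0) =o[atTop] V := by
  have stepA : ∀ N : ℕ, 1 ≤ N → Summable (fun s => if N ≤ s then (N:ℝ)^2 * c s ^ 2 else 0) →
      (∑' p : ℕ × ℕ, (if N ≤ p.1 ∧ N ≤ p.2 ∧ p.1 ≤ p.2 + (N-1) ∧ p.2 ≤ p.1 + (N-1)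
        then c p.1 * c p.2 else 0))
      ≤ (2/(N:ℝ)) * ∑' s, (if N ≤ s then (N:ℝ)^2 * c s ^ 2 else 0) :=
    fun N hN1 hg => stepA_aux c hc N hN1 hg
  have keyb : ∀ N : ℕ, 1 ≤ N → 0 < V N → (∀ j : ℕ, V (2^j * N) ≤ (2:ℝ)^j * V N) →
      ∀ J M : ℕ, ∑ s ∈ range M, (if N ≤ s then (N:ℝ)^2 * c s ^ 2 else 0)
        ≤ V (2^J * N)/2 - V (N-1)/2 + 2*(2:ℝ)⁻¹^J * V N :=
    fun N hN1 hVN hpw => key_aux c hc V hV N hN1 hVN hpw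
  have hg0 : ∀ N s : ℕ, 0 ≤ (if N ≤ s then (N:ℝ)^2 * c s ^ 2 else 0) := by
    intro N s; split_ifs
    · positivity
    · exact le_rfl
  have hf0 : ∀ N : ℕ, ∀ p : ℕ × ℕ,
      0 ≤ (if N ≤ p.1 ∧ N ≤ p.2 ∧ p.1 ≤ p.2 + (N-1) ∧ p.2 ≤ p.1 + (N-1)
        then c p.1 * c p.2 else 0) := by
    intro N p; split_ifs
    · exact mul_nonneg (hc _) (hc _)
    · exact le_rfl
  have hVmono : Monotone V := by
    intro a b hab
    rw [hV, hV]
    have hs : Icc 1 a ⊆ Icc 1 b := Finset.Icc_subset_Icc_right hab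
    have hmono0 : ∀ i ∈ Icc 1 b, i ∉ Icc 1 a → 0 ≤ (i:ℝ)^2 * c i ^ 2 :=
      fun i _ _ => by positivity
    have := Finset.sum_le_sum_of_subset_of_nonneg hs hmono0
    linarith
  have hpos : ∀ᶠ N in atTop, 0 < V N := hdiv.eventually_gt_atTop 0
  have hfloor2 : ∀ N : ℕ, ⌊(2:ℝ) * (N:ℝ)⌋₊ = 2 * N := by
    intro N
    rw [show (2:ℝ) * (N:ℝ) = ((2*N : ℕ) : ℝ) by push_cast; ring, Nat.floor_natCast]
  have h2 : Tendsto (fun N : ℕ => V (2*N) / V N) atTop (nhds 1) := by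
    refine Tendsto.congr (fun N => ?_) (hslow 2 (by norm_num))
    rw [hfloor2]
  have hdble : ∀ᶠ M in atTop, V (2*M) ≤ 2 * V M := by
    filter_upwards [h2.eventually_lt_const (by norm_num : (1:ℝ) < 2), hpos] with M h hp
    exact le_of_lt ((div_lt_iff₀ hp).mp h)
  obtain ⟨N₀', hN₀'⟩ := eventually_atTop.mp (hpos.and hdble)
  set N₀ := max N₀' 1 with hN₀def
  have hN₀fact : ∀ M, N₀ ≤ M → 0 < V M ∧ V (2*M) ≤ 2 * V M :=
    fun M hM => hN₀' M (le_trans (le_max_left _ _) hM)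
  have hpow : ∀ N, N₀ ≤ N → ∀ j : ℕ, V (2^j * N) ≤ (2:ℝ)^j * V N := by
    intro N hN j
    induction j with
    | zero => simp
    | succ j ih =>
      have hNle : N ≤ 2^j * N := by
        calc N = 1*N := (one_mul N).symm
          _ ≤ 2^j * N := Nat.mul_le_mul_right N Nat.one_le_two_pow
      have h1 := (hN₀fact (2^j * N) (le_trans hN hNle)).2
      have heq : 2^(j+1) * N = 2 * (2^j * N) := by ring
      rw [heq]
      calc V (2 * (2^j * N)) ≤ 2 * V (2^j * N) := h1
        _ ≤ 2 * ((2:ℝ)^j * V N) := by linarith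
        _ = (2:ℝ)^(j+1) * V N := by ring
  -- summability and tsum bounds
  have gsumm : ∀ N, N₀ ≤ N → Summable (fun s => if N ≤ s then (N:ℝ)^2 * c s ^ 2 else 0) := by
    intro N hN
    have hN1 : 1 ≤ N := le_trans (le_max_right _ _) hN
    exact summable_of_sum_range_le (hg0 N)
      (keyb N hN1 (hN₀fact N hN).1 (hpow N hN) 0)
  have gtsum : ∀ N, N₀ ≤ N → ∀ J : ℕ,
      (∑' s, (if N ≤ s then (N:ℝ)^2 * c s ^ 2 else 0))
        ≤ V (2^J * N)/2 - V (N-1)/2 + 2*(2:ℝ)⁻¹^J * V N := by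
    intro N hN J
    have hN1 : 1 ≤ N := le_trans (le_max_right _ _) hN
    exact Summable.tsum_le_of_sum_range_le (gsumm N hN)
      (keyb N hN1 (hN₀fact N hN).1 (hpow N hN) J)
  -- final
  rw [Asymptotics.isLittleO_iff]
  intro ε hε
  obtain ⟨J, hJ⟩ := exists_pow_lt_of_lt_one (show (0:ℝ) < ε/8 by linarith)
    (by norm_num : (2:ℝ)⁻¹ < 1)
  have hA : Tendsto (fun N : ℕ => V (2^J*N) / V N) atTop (nhds 1) := by
    refine Tendsto.congr (fun N => ?_) (hslow ((2:ℝ)^J) (by positivity))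
    rw [show ((2:ℝ)^J * (N:ℝ)) = ((2^J*N : ℕ) : ℝ) by push_cast; ring, Nat.floor_natCast]
  have hBlow : Tendsto (fun N : ℕ => V (N/2) / V N) atTop (nhds 1) := by
    refine Tendsto.congr (fun N => ?_) (hslow (1/2) (by norm_num))
    rw [show ((1/2:ℝ) * (N:ℝ)) = (N:ℝ)/((2:ℕ):ℝ) by push_cast; ring,
      Nat.floor_div_natCast, Nat.floor_natCast]
  have hB : Tendsto (fun N : ℕ => V (N-1) / V N) atTop (nhds 1) := by
    apply tendsto_of_tendsto_of_tendsto_of_le_of_le' hBlow tendsto_const_nhds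
    · filter_upwards [hpos, eventually_ge_atTop 2] with N hp h2'
      exact (div_le_div_iff_of_pos_right hp).mpr (hVmono (by omega : N/2 ≤ N-1))
    · filter_upwards [hpos] with N hp
      exact (div_le_one hp).mpr (hVmono (Nat.sub_le N 1))
  have hAB : Tendsto (fun N : ℕ => V (2^J*N)/V N - V (N-1)/V N) atTop (nhds 0) := by
    have := hA.sub hB
    simpa using this
  have hev1 : ∀ᶠ N in atTop, V (2^J*N) - V (N-1) ≤ ε/2 * V N := by
    filter_upwards [hAB.eventually_le_const (show (0:ℝ) < ε/2 by linarith), hpos] with N h hp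
    rw [div_sub_div_same] at h
    calc V (2^J*N) - V (N-1) = (V (2^J*N) - V (N-1))/V N * V N := by field_simp
      _ ≤ ε/2 * V N := mul_le_mul_of_nonneg_right h hp.le
  filter_upwards [eventually_ge_atTop N₀, hev1, hpos] with N hN hev hp
  have hN1 : 1 ≤ N := le_trans (le_max_right _ _) hN
  have hT0 : 0 ≤ ∑' p : ℕ × ℕ, (if N ≤ p.1 ∧ N ≤ p.2 ∧ p.1 ≤ p.2 + (N-1) ∧ p.2 ≤ p.1 + (N-1)
      then c p.1 * c p.2 else 0) := tsum_nonneg (hf0 N)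
  have hG0 : 0 ≤ ∑' s, (if N ≤ s then (N:ℝ)^2 * c s ^ 2 else 0) := tsum_nonneg (hg0 N)
  have hTle := stepA N hN1 (gsumm N hN)
  have hGle := gtsum N hN J
  have hNT : (N:ℝ) * (∑' p : ℕ × ℕ, (if N ≤ p.1 ∧ N ≤ p.2 ∧ p.1 ≤ p.2 + (N-1) ∧ p.2 ≤ p.1 + (N-1)
        then c p.1 * c p.2 else 0))
      ≤ 2 * ∑' s, (if N ≤ s then (N:ℝ)^2 * c s ^ 2 else 0) := by
    have hNne : (N:ℝ) ≠ 0 := Nat.cast_ne_zero.mpr (by omega)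
    have heq2 : (N:ℝ) * ((2/(N:ℝ)) * ∑' s, (if N ≤ s then (N:ℝ)^2 * c s ^ 2 else 0))
        = 2 * ∑' s, (if N ≤ s then (N:ℝ)^2 * c s ^ 2 else 0) := by
      field_simp
    calc (N:ℝ) * _ ≤ (N:ℝ) * ((2/(N:ℝ)) * ∑' s, (if N ≤ s then (N:ℝ)^2 * c s ^ 2 else 0)) :=
          mul_le_mul_of_nonneg_left hTle (Nat.cast_nonneg N)
      _ = _ := heq2
  have h8 : 4*(2:ℝ)⁻¹^J * V N ≤ ε/2 * V N := by
    refine mul_le_mul_of_nonneg_right ?_ hp.le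
    nlinarith [hJ]
  simp only [Real.norm_eq_abs]
  rw [abs_of_nonneg (mul_nonneg (Nat.cast_nonneg N) hT0), abs_of_pos hp]
  linarith
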